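/- Let F = F_x ∪ F_y where F_x is a monotone lattice path from (i,j) to (m,n) and F_y is a pair of non-intersecting monotone lattice paths from (1,1) to (i,n) and from (2,1) to (m,j), all in an m×n grid with (i,j) ≠ (m,n). Then the total number of vertices |F_x| + |F_y| equals 2(m+n) - 2, independently of the choice of (i,j) and of the paths. -/

import Mathlib

/-- A single step in a monotone lattice path: one unit down or one unit right. -/
def IsStep (p q : ℕ × ℕ) : Prop := q = (p.1 + 1, p.2) ∨ q = (p.1, p.2 + 1)

/-- `L` is a monotone lattice path from `(a,b)` to `(c,d)`. -/
def IsPath (a b c d : ℕ) (L : List (ℕ × ℕ)) : Prop :=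
  L ≠ [] ∧ L.head? = some (a, b) ∧ L.getLast? = some (c, d) ∧ L.Chain' IsStep

lemma step_lt {p q : ℕ × ℕ} (h : IsStep p q) : p.1 + p.2 < q.1 + q.2 := by
  rcases h with h | h <;> subst h <;> simp <;> omega

lemma path_nodup (L : List (ℕ × ℕ)) (h : L.Chain' IsStep) : L.Nodup := by
  have h2 : L.Chain' (fun p q : ℕ × ℕ => p.1 + p.2 < q.1 + q.2) :=
    List.IsChain.imp (fun _ _ hs => step_lt hs) h
  have : IsTrans (ℕ × ℕ) (fun p q : ℕ × ℕ => p.1 + p.2 < q.1 + q.2) := ⟨fun _ _ _ => Nat.lt_trans⟩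
  have hp := List.isChain_iff_pairwise.mp h2
  exact hp.imp (fun hlt heq => by subst heq; omega)

lemma path_len : ∀ (L : List (ℕ × ℕ)) (a b c d : ℕ), IsPath a b c d L →
    a ≤ c ∧ b ≤ d ∧ L.length = (c - a) + (d - b) + 1 := by
  intro L
  induction L with
  | nil => intro a b c d h; exact absurd rfl h.1
  | cons x t ih =>
    intro a b c d h
    obtain ⟨-, hh, hl, hc⟩ := h
    simp at hh
    subst hh
    cases t with
    | nil =>
      simp [List.getLast?] at hl
      obtain ⟨hc', hd⟩ := hl
      subst hc'; subst hd
      simp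
    | cons y t' =>
      have hstep : IsStep (a, b) y := (List.isChain_cons_cons.mp hc).1
      have hc' : (y :: t').Chain' IsStep := (List.isChain_cons_cons.mp hc).2
      have hl' : (y :: t').getLast? = some (c, d) := by
        rw [← hl]; simp [List.getLast?_cons_cons]
      have hp : IsPath y.1 y.2 c d (y :: t') := ⟨by simp, by simp, hl', hc'⟩
      obtain ⟨h1, h2, h3⟩ := ih y.1 y.2 c d hp
      rcases hstep with hs | hs <;> rw [hs] at h1 h2 h3 <;> simp at h1 h2 h3 ⊢ <;> omega

theorem facet_vertex_count (m n i j : ℕ) (Lx P Q : List (ℕ × ℕ))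
    (hne : (i, j) ≠ (m, n))
    (hLx : IsPath i j m n Lx)
    (hP : IsPath 1 1 i n P) (hQ : IsPath 2 1 m j Q)
    (hdisj : ∀ v ∈ P, v ∉ Q) :
    Lx.toFinset.card + (P.toFinset.card + Q.toFinset.card) = 2 * (m + n) - 2 := by
  obtain ⟨h1, h2, h3⟩ := path_len Lx i j m n hLx
  obtain ⟨h4, h5, h6⟩ := path_len P 1 1 i n hP
  obtain ⟨h7, h8, h9⟩ := path_len Q 2 1 m j hQ
  rw [List.toFinset_card_of_nodup (path_nodup Lx hLx.2.2.2),
      List.toFinset_card_of_nodup (path_nodup P hP.2.2.2),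
      List.toFinset_card_of_nodup (path_nodup Q hQ.2.2.2)]
  omega
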